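/- Let V be a finite-dimensional real inner product space with dim V = n, and let C : V × V → ℝ be a symmetric bilinear form. Suppose that for all X, Z, Y, W ∈ V the expression ⟨C(Z,Y)X − C(X,Y)Z, W⟩ is symmetric under exchanging Y and W, i.e. ⟨C(Z,Y)X − C(X,Y)Z, W⟩ = ⟨Y, C(Z,W)X − C(X,W)Z⟩. Then (tr_g C)·⟨X,W⟩ + (n−2)·C(X,W) = 0 for all X, W, where tr_g C = ∑ᵢ C(Zᵢ,Zᵢ) for any orthonormal basis (Zᵢ). -/

import Mathlib

/-- Tracing identity for the symmetric bilinear form C (Lemma 2.5 key computation). -/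
theorem stmt0 {V : Type*} [NormedAddCommGroup V] [InnerProductSpace ℝ V]
    (n : ℕ) (hn : Module.finrank ℝ V = n)
    (C : V →ₗ[ℝ] V →ₗ[ℝ] ℝ)
    (hCsym : ∀ X Z : V, C X Z = C Z X)
    (hsym : ∀ X Z Y W : V,
      (inner ℝ (C Z Y • X - C X Y • Z) W : ℝ) = inner ℝ Y (C Z W • X - C X W • Z))
    (b : OrthonormalBasis (Fin n) ℝ V) (X W : V) :
    (∑ i, C (b i) (b i)) * (inner ℝ X W : ℝ) + ((n : ℝ) - 2) * C X W = 0 := by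
  have h : ∀ Z Y : V,
      C Z Y * (inner ℝ X W : ℝ) - C X Y * inner ℝ Z W
        = C Z W * (inner ℝ Y X : ℝ) - C X W * inner ℝ Y Z := by
    intro Z Y
    have := hsym X Z Y W
    simp only [inner_sub_left, inner_sub_right, inner_smul_left, inner_smul_right,
      RCLike.star_def, conj_trivial] at this
    linarith [this]
  have key : ∀ u v : V, ∑ i, C u (b i) * (inner ℝ (b i) v : ℝ) = C u v := by
    intro u v
    conv_rhs => rw [← b.sum_repr' v]
    rw [map_sum]
    exact Finset.sum_congr rfl fun i _ => by rw [map_smul, smul_eq_mul]; ring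
  have hsumC : ∑ i, C X (b i) * (inner ℝ (b i) W : ℝ) = C X W := key X W
  have hsumC2 : ∑ i, C (b i) W * (inner ℝ (b i) X : ℝ) = C X W := by
    rw [hCsym X W, ← key W X]
    exact Finset.sum_congr rfl fun i _ => by rw [hCsym (b i) W]
  have hnorm : ∀ i, (inner ℝ (b i) (b i) : ℝ) = 1 := fun i => by
    rw [real_inner_self_eq_norm_sq, b.orthonormal.1 i]; norm_num
  have hsum := Finset.sum_congr rfl (fun i (_ : i ∈ Finset.univ) => h (b i) (b i))
  simp only [Finset.sum_sub_distrib, ← Finset.sum_mul, ← Finset.mul_sum] at hsum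
  rw [hsumC] at hsum
  have hsum2 : ∑ i, C (b i) W * (inner ℝ (b i) X : ℝ)
      - C X W * ∑ i : Fin n, (inner ℝ (b i) (b i) : ℝ)
      = C X W - C X W * n := by
    rw [hsumC2]
    simp [hnorm]
  rw [hsum2] at hsum
  linarith [hsum]
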